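/- For every n ≥ 1, | E[Q_n] − 2σ²/(1 − a₁²) | ≤ 2σ² / ((1 − a₁²)² n). -/

import Mathlib

open MeasureTheory Filter ProbabilityTheory Real

lemma gint_pow (n : ℕ) : Integrable (fun x : ℝ => x ^ n * Real.exp (-(2⁻¹ : ℝ) * x ^ 2)) := by
  have h := integrable_rpow_mul_exp_neg_mul_sq (b := (2⁻¹:ℝ)) (by norm_num)
    (s := (n:ℝ)) (by exact_mod_cast lt_of_lt_of_le neg_one_lt_zero (Nat.cast_nonneg n))
  simpa [Real.rpow_natCast] using h

lemma gint_rec (n : ℕ) :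
    ∫ x : ℝ, x ^ (n+2) * Real.exp (-(2⁻¹ : ℝ) * x ^ 2)
      = (n+1 : ℝ) * ∫ x : ℝ, x ^ n * Real.exp (-(2⁻¹ : ℝ) * x ^ 2) := by
  have hderiv : ∀ x : ℝ, HasDerivAt (fun x : ℝ => x ^ (n+1) * Real.exp (-(2⁻¹ : ℝ) * x ^ 2))
      ((n+1 : ℝ) * x ^ n * Real.exp (-(2⁻¹ : ℝ) * x ^ 2)
        - x ^ (n+2) * Real.exp (-(2⁻¹ : ℝ) * x ^ 2)) x := by
    intro x
    have h1 : HasDerivAt (fun x : ℝ => -(2⁻¹ : ℝ) * x ^ 2) (-(2⁻¹ : ℝ) * (2 * x ^ 1)) x :=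
      (hasDerivAt_pow 2 x).const_mul _
    have h2 := (hasDerivAt_pow (n+1) x).fun_mul h1.exp
    refine h2.congr_deriv ?_
    rw [Nat.add_sub_cancel]
    push_cast
    ring
  have hint : Integrable (fun x : ℝ => (n+1 : ℝ) * x ^ n * Real.exp (-(2⁻¹ : ℝ) * x ^ 2)
      - x ^ (n+2) * Real.exp (-(2⁻¹ : ℝ) * x ^ 2)) := by
    have := ((gint_pow n).const_mul (n+1 : ℝ)).sub (gint_pow (n+2))
    simpa [mul_assoc, Pi.sub_def] using this
  have h0 := integral_eq_zero_of_hasDerivAt_of_integrable hderiv hint (gint_pow (n+1))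
  have hA : Integrable (fun x : ℝ => (n+1 : ℝ) * x ^ n * Real.exp (-(2⁻¹ : ℝ) * x ^ 2)) := by
    simpa [mul_assoc] using (gint_pow n).const_mul (n+1 : ℝ)
  rw [integral_sub hA (gint_pow (n+2)), sub_eq_zero] at h0
  rw [← h0]
  simp_rw [mul_assoc]
  rw [integral_const_mul]

lemma gint_zero : ∫ x : ℝ, Real.exp (-(2⁻¹ : ℝ) * x ^ 2) = Real.sqrt (2 * π) := by
  have := integral_gaussian (2⁻¹ : ℝ)
  rw [show π / (2⁻¹:ℝ) = 2 * π by ring] at this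
  simpa using this

lemma gpdf_eq (x : ℝ) :
    gaussianPDFReal 0 1 x = (Real.sqrt (2 * π))⁻¹ * Real.exp (-(2⁻¹ : ℝ) * x ^ 2) := by
  simp only [gaussianPDFReal, NNReal.coe_one, mul_one, sub_zero]
  congr 1
  ring

lemma gauss_transfer (g : ℝ → ℝ) :
    ∫ x, g x ∂(gaussianReal 0 1) = ∫ x, gaussianPDFReal 0 1 x * g x := by
  have hd : gaussianReal 0 1
      = volume.withDensity (fun x => ((gaussianPDFReal 0 1 x).toNNReal : ENNReal)) := by
    rw [gaussianReal_of_var_ne_zero _ one_ne_zero]; rfl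
  rw [hd, integral_withDensity_eq_integral_smul
    ((measurable_gaussianPDFReal 0 1).real_toNNReal) g]
  congr 1; ext x
  simp [NNReal.smul_def, Real.coe_toNNReal _ (gaussianPDFReal_nonneg 0 1 x)]

lemma gauss_integrable_pow (n : ℕ) : Integrable (fun x : ℝ => x ^ n) (gaussianReal 0 1) := by
  have hd : gaussianReal 0 1
      = volume.withDensity (fun x => ((gaussianPDFReal 0 1 x).toNNReal : ENNReal)) := by
    rw [gaussianReal_of_var_ne_zero _ one_ne_zero]; rfl
  rw [hd, integrable_withDensity_iff_integrable_smul
    ((measurable_gaussianPDFReal 0 1).real_toNNReal)]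
  have : Integrable (fun x : ℝ => (Real.sqrt (2 * π))⁻¹ * (x ^ n * Real.exp (-(2⁻¹:ℝ) * x ^ 2))) :=
    (gint_pow n).const_mul _
  apply this.congr
  filter_upwards with x
  rw [NNReal.smul_def, Real.coe_toNNReal _ (gaussianPDFReal_nonneg 0 1 x), gpdf_eq,
    smul_eq_mul]
  ring

lemma sqrt_two_pi_pos : (0:ℝ) < Real.sqrt (2 * π) := Real.sqrt_pos.2 (by positivity)

lemma gauss_moment_two : ∫ x, x ^ 2 ∂(gaussianReal 0 1) = 1 := by
  rw [gauss_transfer]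
  have h2 := gint_rec 0
  simp only [pow_zero, one_mul] at h2
  rw [gint_zero] at h2
  simp_rw [gpdf_eq, mul_assoc]
  rw [integral_const_mul]
  simp_rw [mul_comm (Real.exp _)]
  rw [show (0:ℕ)+2 = 2 by rfl] at h2
  rw [h2]
  push_cast
  rw [zero_add, one_mul, inv_mul_cancel₀ sqrt_two_pi_pos.ne']

lemma gauss_moment_four : ∫ x, x ^ 4 ∂(gaussianReal 0 1) = 3 := by
  rw [gauss_transfer]
  have h2 := gint_rec 0
  simp only [pow_zero, one_mul] at h2
  rw [gint_zero] at h2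
  have h4 := gint_rec 2
  rw [show (2:ℕ)+2 = 4 by rfl] at h4
  rw [show (0:ℕ)+2 = 2 by rfl] at h2
  rw [h2] at h4
  simp_rw [gpdf_eq, mul_assoc]
  rw [integral_const_mul]
  simp_rw [mul_comm (Real.exp _)]
  rw [h4]
  push_cast
  rw [show ((2:ℝ)+1) * ((0+1) * Real.sqrt (2*π)) = Real.sqrt (2*π) * 3 by ring,
    ← mul_assoc, inv_mul_cancel₀ sqrt_two_pi_pos.ne', one_mul]

lemma sum_geom_reindex (r : ℝ) (i : ℕ) :
    ∑ k ∈ Finset.Icc 1 i, r ^ (i - k) = ∑ j ∈ Finset.range i, r ^ j := by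
  refine Finset.sum_nbij' (i := fun k => i - k) (j := fun j => i - j) ?_ ?_ ?_ ?_ ?_
  · intro k hk; simp only [Finset.mem_Icc] at hk; simp only [Finset.mem_range]; omega
  · intro j hj; simp only [Finset.mem_range] at hj; simp only [Finset.mem_Icc]; omega
  · intro k hk; simp only [Finset.mem_Icc] at hk; omega
  · intro j hj; simp only [Finset.mem_range] at hj; omega
  · intro k _; rfl

theorem stmt_15
    {Ω : Type*} [MeasurableSpace Ω] (P : Measure Ω) [IsProbabilityMeasure P]
    (Z : ℕ → Ω → ℝ) (hmeas : ∀ k, Measurable (Z k))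
    (hindep : iIndepFun Z P)
    (hgauss : ∀ k, Measure.map (Z k) P = gaussianReal 0 1)
    (σ : ℝ) (hσ : 0 < σ) (a₁ : ℝ) (ha₁ : |a₁| < 1)
    (Y : ℕ → Ω → ℝ)
    (hY : ∀ i ω, Y i ω = ∑ k ∈ Finset.Icc 1 i, a₁ ^ (i - k) * (σ * ((Z k ω) ^ 2 - 1)))
    (Q : ℕ → Ω → ℝ) (hQ : ∀ n ω, Q n ω = (1 / (n : ℝ)) * ∑ i ∈ Finset.Icc 1 n, (Y i ω) ^ 2) :
    ∀ n : ℕ, 1 ≤ n →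
      |(∫ ω, Q n ω ∂P) - 2 * σ ^ 2 / (1 - a₁ ^ 2)| ≤ 2 * σ ^ 2 / ((1 - a₁ ^ 2) ^ 2 * n) := by
  intro n hn
  -- basic facts about a₁
  set r : ℝ := a₁ ^ 2 with hr_def
  have hr0 : 0 ≤ r := sq_nonneg a₁
  have hr1 : r < 1 := by
    rw [hr_def, ← sq_abs]
    exact pow_lt_one₀ (abs_nonneg a₁) ha₁ two_ne_zero
  have h1r : (0:ℝ) < 1 - r := by linarith
  -- moments of Z
  have hZae : ∀ k, AEMeasurable (Z k) P := fun k => (hmeas k).aemeasurable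
  have hgm : ∀ m : ℕ, Measurable (fun x : ℝ => x ^ m) := fun m => by fun_prop
  have hpow_int : ∀ k m, Integrable (fun ω => (Z k ω) ^ m) P := by
    intro k m
    have h1 : Integrable (fun x : ℝ => x ^ m) (Measure.map (Z k) P) := by
      rw [hgauss]; exact gauss_integrable_pow m
    exact (integrable_map_measure (hgm m).aestronglyMeasurable (hZae k)).1 h1
  have hmom : ∀ k m, ∫ ω, (Z k ω) ^ m ∂P = ∫ x, x ^ m ∂(gaussianReal 0 1) := by
    intro k m
    rw [← hgauss k, integral_map (hZae k) (hgm m).aestronglyMeasurable]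
  have hm2 : ∀ k, ∫ ω, (Z k ω) ^ 2 ∂P = 1 := fun k => (hmom k 2).trans gauss_moment_two
  have hm4 : ∀ k, ∫ ω, (Z k ω) ^ 4 ∂P = 3 := fun k => (hmom k 4).trans gauss_moment_four
  -- the centered noise X k = Z k ^ 2 - 1
  have hXint : ∀ k, Integrable (fun ω => (Z k ω) ^ 2 - 1) P :=
    fun k => (hpow_int k 2).sub (integrable_const 1)
  have hXmean : ∀ k, ∫ ω, ((Z k ω) ^ 2 - 1) ∂P = 0 := by
    intro k
    rw [integral_sub (hpow_int k 2) (integrable_const 1), hm2 k]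
    simp
  have hφ : Measurable (fun x : ℝ => x ^ 2 - 1) :=
    (measurable_id.pow_const 2).sub measurable_const
  have hXindep : ∀ k l, k ≠ l →
      IndepFun (fun ω => (Z k ω) ^ 2 - 1) (fun ω => (Z l ω) ^ 2 - 1) P :=
    fun k l hkl => (hindep.indepFun hkl).comp hφ hφ
  have hsq_eq : ∀ k, (fun ω => ((Z k ω) ^ 2 - 1) * ((Z k ω) ^ 2 - 1))
      = fun ω => (Z k ω) ^ 4 - 2 * (Z k ω) ^ 2 + 1 := by
    intro k; funext ω; ring
  have hprod_int : ∀ k l, Integrable (fun ω => ((Z k ω) ^ 2 - 1) * ((Z l ω) ^ 2 - 1)) P := by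
    intro k l
    rcases eq_or_ne k l with h | h
    · subst h
      rw [hsq_eq k]
      exact ((hpow_int k 4).sub ((hpow_int k 2).const_mul 2)).add (integrable_const 1)
    · exact (hXindep k l h).integrable_mul (hXint k) (hXint l)
  have hprod_mean : ∀ k l, ∫ ω, ((Z k ω) ^ 2 - 1) * ((Z l ω) ^ 2 - 1) ∂P
      = if k = l then 2 else 0 := by
    intro k l
    rcases eq_or_ne k l with h | h
    · subst h
      rw [if_pos rfl]
      have i2 : Integrable (fun ω => 2 * (Z k ω) ^ 2) P := (hpow_int k 2).const_mul 2
      have i1 : Integrable (fun ω => (Z k ω) ^ 4 - 2 * (Z k ω) ^ 2) P :=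
        (hpow_int k 4).sub i2
      rw [hsq_eq k, integral_add i1 (integrable_const 1),
        integral_sub (hpow_int k 4) i2, integral_const_mul, hm4 k, hm2 k, integral_const]
      simp
      norm_num
    · rw [if_neg h]
      have := (hXindep k l h).integral_mul_eq_mul_integral (hXint k).1 (hXint l).1
      rw [Pi.mul_def] at this
      rw [this, hXmean k, hXmean l, mul_zero]
  -- expansion of Y i ^ 2
  have hYsq : ∀ i ω, (Y i ω) ^ 2 = ∑ k ∈ Finset.Icc 1 i, ∑ l ∈ Finset.Icc 1 i,
      ((a₁ ^ (i - k) * σ) * (a₁ ^ (i - l) * σ))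
        * (((Z k ω) ^ 2 - 1) * ((Z l ω) ^ 2 - 1)) := by
    intro i ω
    rw [hY, sq, Finset.sum_mul_sum]
    refine Finset.sum_congr rfl fun k _ => Finset.sum_congr rfl fun l _ => by ring
  have hYsq_int : ∀ i, Integrable (fun ω => (Y i ω) ^ 2) P := by
    intro i
    have hbig : Integrable (fun ω => ∑ k ∈ Finset.Icc 1 i, ∑ l ∈ Finset.Icc 1 i,
        ((a₁ ^ (i - k) * σ) * (a₁ ^ (i - l) * σ))
          * (((Z k ω) ^ 2 - 1) * ((Z l ω) ^ 2 - 1))) P := by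
      apply integrable_finset_sum
      intro k _
      apply integrable_finset_sum
      intro l _
      exact (hprod_int k l).const_mul _
    exact hbig.congr (Filter.Eventually.of_forall fun ω => (hYsq i ω).symm)
  -- expected value of Y i ^ 2
  have hEY : ∀ i, ∫ ω, (Y i ω) ^ 2 ∂P
      = 2 * σ ^ 2 * ∑ j ∈ Finset.range i, r ^ j := by
    intro i
    have h1 : ∫ ω, (Y i ω) ^ 2 ∂P = ∑ k ∈ Finset.Icc 1 i, ∑ l ∈ Finset.Icc 1 i,
        ((a₁ ^ (i - k) * σ) * (a₁ ^ (i - l) * σ))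
          * ∫ ω, (((Z k ω) ^ 2 - 1) * ((Z l ω) ^ 2 - 1)) ∂P := by
      rw [integral_congr_ae (Filter.Eventually.of_forall (hYsq i)),
        integral_finset_sum _ (fun k _ => integrable_finset_sum _
          (fun l _ => (hprod_int k l).const_mul _))]
      refine Finset.sum_congr rfl fun k _ => ?_
      rw [integral_finset_sum _ (fun l _ => (hprod_int k l).const_mul _)]
      exact Finset.sum_congr rfl fun l _ => integral_const_mul _ _
    rw [h1]
    have h2 : ∀ k ∈ Finset.Icc 1 i, (∑ l ∈ Finset.Icc 1 i,
        ((a₁ ^ (i - k) * σ) * (a₁ ^ (i - l) * σ))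
          * ∫ ω, (((Z k ω) ^ 2 - 1) * ((Z l ω) ^ 2 - 1)) ∂P)
        = 2 * σ ^ 2 * r ^ (i - k) := by
      intro k hk
      have h3 : ∀ l, ((a₁ ^ (i - k) * σ) * (a₁ ^ (i - l) * σ))
          * ∫ ω, (((Z k ω) ^ 2 - 1) * ((Z l ω) ^ 2 - 1)) ∂P
          = if k = l then ((a₁ ^ (i - k) * σ) * (a₁ ^ (i - l) * σ)) * 2 else 0 := by
        intro l
        rw [hprod_mean k l]
        split <;> simp
      simp_rw [h3]
      rw [Finset.sum_ite_eq (Finset.Icc 1 i) k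
        (fun l => (a₁ ^ (i - k) * σ) * (a₁ ^ (i - l) * σ) * 2), if_pos hk]
      rw [hr_def, ← pow_right_comm]
      ring
    rw [Finset.sum_congr rfl h2, ← Finset.mul_sum]
    congr 1
    exact sum_geom_reindex r i
  -- expected value of Q n
  have hEQ : ∫ ω, Q n ω ∂P = (1 / (n : ℝ)) * ∑ i ∈ Finset.Icc 1 n,
      (2 * σ ^ 2 * ∑ j ∈ Finset.range i, r ^ j) := by
    have h1 : (fun ω => Q n ω) = fun ω => (1 / (n : ℝ)) * ∑ i ∈ Finset.Icc 1 n, (Y i ω) ^ 2 := by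
      funext ω; exact hQ n ω
    rw [h1, integral_const_mul, integral_finset_sum _ (fun i _ => hYsq_int i)]
    congr 1
    exact Finset.sum_congr rfl fun i _ => hEY i
  -- arithmetic conclusion
  have hnpos : (0:ℝ) < n := by exact_mod_cast Nat.lt_of_lt_of_le Nat.zero_lt_one hn
  have hgeom : ∀ i : ℕ, (∑ j ∈ Finset.range i, r ^ j) = (1 - r ^ i) / (1 - r) := by
    intro i
    rw [geom_sum_eq hr1.ne i, ← neg_sub 1 (r ^ i), ← neg_sub 1 r, neg_div_neg_eq]
  have hsum : ∑ i ∈ Finset.Icc 1 n, (2 * σ ^ 2 * ∑ j ∈ Finset.range i, r ^ j)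
      = (n : ℝ) * (2 * σ ^ 2 / (1 - r))
        - (2 * σ ^ 2 / (1 - r)) * ∑ i ∈ Finset.Icc 1 n, r ^ i := by
    have hterm : ∀ i ∈ Finset.Icc 1 n, 2 * σ ^ 2 * ∑ j ∈ Finset.range i, r ^ j
        = 2 * σ ^ 2 / (1 - r) - (2 * σ ^ 2 / (1 - r)) * r ^ i := by
      intro i _
      rw [hgeom i]
      field_simp
    rw [Finset.sum_congr rfl hterm, Finset.sum_sub_distrib, Finset.sum_const,
      Nat.card_Icc, ← Finset.mul_sum]
    simp [nsmul_eq_mul]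
  have hEQ' : (∫ ω, Q n ω ∂P) - 2 * σ ^ 2 / (1 - r)
      = -((2 * σ ^ 2 / (1 - r)) * (∑ i ∈ Finset.Icc 1 n, r ^ i) / n) := by
    rw [hEQ, hsum]
    field_simp
    ring
  have hTnonneg : (0:ℝ) ≤ ∑ i ∈ Finset.Icc 1 n, r ^ i :=
    Finset.sum_nonneg fun i _ => pow_nonneg hr0 i
  have hT : ∑ i ∈ Finset.Icc 1 n, r ^ i ≤ 1 / (1 - r) := by
    have h1 : ∑ i ∈ Finset.Icc 1 n, r ^ i = ∑ i ∈ Finset.Ico 1 (n+1), r ^ i := by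
      rw [Finset.Ico_add_one_right_eq_Icc]
    have h2 := geom_sum_Ico_le_of_lt_one hr0 hr1 (m := 1) (n := n+1)
    rw [pow_one] at h2
    rw [h1]
    refine h2.trans ?_
    gcongr <;> linarith
  rw [hEQ', abs_neg, abs_of_nonneg (by positivity)]
  calc 2 * σ ^ 2 / (1 - r) * (∑ i ∈ Finset.Icc 1 n, r ^ i) / n
      ≤ 2 * σ ^ 2 / (1 - r) * (1 / (1 - r)) / n := by gcongr
    _ = 2 * σ ^ 2 / ((1 - r) ^ 2 * n) := by
        rw [div_mul_div_comm, mul_one, div_div, ← pow_two]
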